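/- Fix an integer N ≥ 2, a real p with 0 < p < 1, q = 1 − p, and a strategy S. Then there exists exactly one function L : {0,…,N} → ℝ satisfying L(0) = 0, L(N) = 1, and L(i) = q·L(i − S(i)) + p·L(i + S(i)) for all 1 ≤ i ≤ N − 1. -/

import Mathlib

/-- Maximum principle for the homogeneous win-probability system:
a solution with zero boundary values is nonpositive on `[0, N]`. -/
lemma winprob_hom_nonpos
    (N : ℕ) (hN : 2 ≤ N) (p q : ℝ)
    (hp0 : 0 < p) (hp1 : p < 1) (hq : q = 1 - p)
    (S : ℕ → ℕ)
    (hS : ∀ i : ℕ, 1 ≤ i → i ≤ N - 1 → 1 ≤ S i ∧ S i ≤ min i (N - i))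
    (D : ℕ → ℝ) (h0 : D 0 = 0) (hNd : D N = 0)
    (hrec : ∀ i : ℕ, 1 ≤ i → i ≤ N - 1 →
      D i = q * D (i - S i) + p * D (i + S i)) :
    ∀ i : ℕ, i ≤ N → D i ≤ 0 := by
  have hq0 : 0 < q := by rw [hq]; linarith
  have hne : (Finset.range (N + 1)).Nonempty := ⟨0, by simp⟩
  set M := (Finset.range (N + 1)).sup' hne D with hM
  have hub : ∀ j : ℕ, j ≤ N → D j ≤ M := by
    intro j hj
    exact Finset.le_sup' D (by simp [Nat.lt_succ_iff, hj])
  obtain ⟨i₀, hi₀, hDi₀⟩ := Finset.exists_mem_eq_sup' hne D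
  have hi₀N : i₀ ≤ N := by simpa [Nat.lt_succ_iff] using hi₀
  have key : ∀ k : ℕ, ∀ i : ℕ, i ≤ N → N - i ≤ k → D i = M → M ≤ 0 := by
    intro k
    induction k with
    | zero =>
      intro i hiN hk hDi
      have : i = N := by omega
      subst this
      rw [hNd] at hDi; linarith
    | succ k ih =>
      intro i hiN hk hDi
      by_cases hi0 : i = 0
      · subst hi0; rw [h0] at hDi; linarith
      by_cases hiN' : i = N
      · subst hiN'; rw [hNd] at hDi; linarith
      have h1 : 1 ≤ i := by omega
      have h2 : i ≤ N - 1 := by omega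
      obtain ⟨hs1, hs2⟩ := hS i h1 h2
      have hb : i + S i ≤ N := by omega
      have ha : i - S i ≤ N := by omega
      have hDa := hub _ ha
      have hDb := hub _ hb
      have hrec' := hrec i h1 h2
      have heq : D (i + S i) = M := by
        have h3 : q * D (i - S i) ≤ q * M :=
          mul_le_mul_of_nonneg_left hDa hq0.le
        have h4 : q * M + p * M = M := by rw [hq]; ring
        have h5 : p * M ≤ p * D (i + S i) := by linarith
        have h6 : M ≤ D (i + S i) := le_of_mul_le_mul_left h5 hp0
        linarith
      exact ih (i + S i) hb (by omega) heq
  have hM0 : M ≤ 0 := key (N - i₀) i₀ hi₀N le_rfl (hDi₀.symm)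
  intro i hi
  exact le_trans (hub i hi) hM0

/-- Zero boundary values force the zero solution on `[0, N]`. -/
lemma winprob_hom_zero
    (N : ℕ) (hN : 2 ≤ N) (p q : ℝ)
    (hp0 : 0 < p) (hp1 : p < 1) (hq : q = 1 - p)
    (S : ℕ → ℕ)
    (hS : ∀ i : ℕ, 1 ≤ i → i ≤ N - 1 → 1 ≤ S i ∧ S i ≤ min i (N - i))
    (D : ℕ → ℝ) (h0 : D 0 = 0) (hNd : D N = 0)
    (hrec : ∀ i : ℕ, 1 ≤ i → i ≤ N - 1 →
      D i = q * D (i - S i) + p * D (i + S i)) :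
    ∀ i : ℕ, i ≤ N → D i = 0 := by
  intro i hi
  have hle := winprob_hom_nonpos N hN p q hp0 hp1 hq S hS D h0 hNd hrec i hi
  have hge := winprob_hom_nonpos N hN p q hp0 hp1 hq S hS (fun j => -(D j))
    (by simp [h0]) (by simp [hNd])
    (by
      intro j hj1 hj2
      show -(D j) = q * -(D (j - S j)) + p * -(D (j + S j))
      have := hrec j hj1 hj2
      linarith) i hi
  have hge' : -(D i) ≤ 0 := hge
  linarith

/-- Existence and uniqueness of the solution of the win-probability system
for a stationary strategy `S`: `L 0 = 0`, `L N = 1`,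
`L i = q·L(i - S i) + p·L(i + S i)` for `1 ≤ i ≤ N - 1`. -/
theorem win_prob_system_exists_unique
    (N : ℕ) (hN : 2 ≤ N) (p q : ℝ)
    (hp0 : 0 < p) (hp1 : p < 1) (hq : q = 1 - p)
    (S : ℕ → ℕ)
    (hS : ∀ i : ℕ, 1 ≤ i → i ≤ N - 1 → 1 ≤ S i ∧ S i ≤ min i (N - i)) :
    (∃ L : ℕ → ℝ, L 0 = 0 ∧ L N = 1 ∧
        ∀ i : ℕ, 1 ≤ i → i ≤ N - 1 →
          L i = q * L (i - S i) + p * L (i + S i)) ∧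
    (∀ L₁ L₂ : ℕ → ℝ,
        (L₁ 0 = 0 ∧ L₁ N = 1 ∧
          ∀ i : ℕ, 1 ≤ i → i ≤ N - 1 →
            L₁ i = q * L₁ (i - S i) + p * L₁ (i + S i)) →
        (L₂ 0 = 0 ∧ L₂ N = 1 ∧
          ∀ i : ℕ, 1 ≤ i → i ≤ N - 1 →
            L₂ i = q * L₂ (i - S i) + p * L₂ (i + S i)) →
        ∀ i : ℕ, i ≤ N → L₁ i = L₂ i) := by
  constructor
  · -- Existence via a linear endomorphism of `Fin (N+1) → ℝ`
    have hbnd : ∀ j : Fin (N + 1), 1 ≤ (j : ℕ) ∧ (j : ℕ) ≤ N - 1 →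
        (j : ℕ) - S (j : ℕ) < N + 1 ∧ (j : ℕ) + S (j : ℕ) < N + 1 := by
      intro j hj
      have := hS (j : ℕ) hj.1 hj.2
      omega
    let T : (Fin (N + 1) → ℝ) →ₗ[ℝ] (Fin (N + 1) → ℝ) :=
      { toFun := fun L j =>
          if hj : 1 ≤ (j : ℕ) ∧ (j : ℕ) ≤ N - 1 then
            L j - (q * L ⟨(j : ℕ) - S (j : ℕ), (hbnd j hj).1⟩
              + p * L ⟨(j : ℕ) + S (j : ℕ), (hbnd j hj).2⟩)
          else L j
        map_add' := by
          intro x y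
          funext j
          dsimp only [Pi.add_apply]
          by_cases hj : 1 ≤ (j : ℕ) ∧ (j : ℕ) ≤ N - 1
          · rw [dif_pos hj, dif_pos hj, dif_pos hj]; ring
          · rw [dif_neg hj, dif_neg hj, dif_neg hj]
        map_smul' := by
          intro c x
          funext j
          dsimp only [Pi.smul_apply, smul_eq_mul, RingHom.id_apply]
          by_cases hj : 1 ≤ (j : ℕ) ∧ (j : ℕ) ≤ N - 1
          · rw [dif_pos hj, dif_pos hj]; ring
          · rw [dif_neg hj, dif_neg hj] }
    have hinj : Function.Injective T := by
      rw [← LinearMap.ker_eq_bot, LinearMap.ker_eq_bot']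
      intro L hL
      set D : ℕ → ℝ := fun i => if h : i < N + 1 then L ⟨i, h⟩ else 0 with hD
      have hDval : ∀ i : ℕ, ∀ h : i < N + 1, D i = L ⟨i, h⟩ := by
        intro i h; simp only [hD, dif_pos h]
      have hTL : ∀ j : Fin (N + 1), T L j = 0 := fun j => congrFun hL j
      have h0 : D 0 = 0 := by
        have := hTL ⟨0, by omega⟩
        simp only [T, LinearMap.coe_mk, AddHom.coe_mk] at this
        rw [dif_neg (by simp)] at this
        rw [hDval 0 (by omega)]; exact this
      have hNd : D N = 0 := by
        have := hTL ⟨N, by omega⟩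
        simp only [T, LinearMap.coe_mk, AddHom.coe_mk] at this
        rw [dif_neg (by omega)] at this
        rw [hDval N (by omega)]; exact this
      have hrec : ∀ i : ℕ, 1 ≤ i → i ≤ N - 1 →
          D i = q * D (i - S i) + p * D (i + S i) := by
        intro i h1 h2
        have hiN : i < N + 1 := by omega
        have hj : 1 ≤ ((⟨i, hiN⟩ : Fin (N + 1)) : ℕ) ∧
            ((⟨i, hiN⟩ : Fin (N + 1)) : ℕ) ≤ N - 1 := ⟨h1, h2⟩
        have := hTL ⟨i, hiN⟩
        simp only [T, LinearMap.coe_mk, AddHom.coe_mk] at this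
        rw [dif_pos hj] at this
        have hs := hS i h1 h2
        rw [hDval i hiN, hDval (i - S i) (by omega), hDval (i + S i) (by omega)]
        linarith [this]
      have hz := winprob_hom_zero N hN p q hp0 hp1 hq S hS D h0 hNd hrec
      funext j
      have := hz (j : ℕ) (by omega)
      rw [hDval (j : ℕ) j.isLt] at this
      simpa using this
    have hsurj : Function.Surjective T :=
      LinearMap.injective_iff_surjective.mp hinj
    obtain ⟨L, hTLe⟩ := hsurj (fun j => if (j : ℕ) = N then 1 else 0)
    have hTL : ∀ j : Fin (N + 1), T L j = if (j : ℕ) = N then 1 else 0 :=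
      fun j => congrFun hTLe j
    refine ⟨fun i => if h : i < N + 1 then L ⟨i, h⟩ else 0, ?_, ?_, ?_⟩
    · have := hTL ⟨0, by omega⟩
      simp only [T, LinearMap.coe_mk, AddHom.coe_mk] at this
      rw [dif_neg (by simp)] at this
      simp only [dif_pos (show 0 < N + 1 by omega)]
      rw [this, if_neg (show ¬((⟨0, by omega⟩ : Fin (N + 1)) : ℕ) = N by simp; omega)]
    · have := hTL ⟨N, by omega⟩
      simp only [T, LinearMap.coe_mk, AddHom.coe_mk] at this
      rw [dif_neg (by omega)] at this
      simp only [dif_pos (show N < N + 1 by omega)]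
      rw [this]; simp
    · intro i h1 h2
      have hiN : i < N + 1 := by omega
      have hs := hS i h1 h2
      have hj : 1 ≤ ((⟨i, hiN⟩ : Fin (N + 1)) : ℕ) ∧
          ((⟨i, hiN⟩ : Fin (N + 1)) : ℕ) ≤ N - 1 := ⟨h1, h2⟩
      have := hTL ⟨i, hiN⟩
      simp only [T, LinearMap.coe_mk, AddHom.coe_mk] at this
      rw [dif_pos hj, if_neg (show ¬i = N by omega)] at this
      simp only [dif_pos hiN, dif_pos (show i - S i < N + 1 by omega),
        dif_pos (show i + S i < N + 1 by omega)]
      linarith [this]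
  · -- Uniqueness via the maximum principle
    rintro L₁ L₂ ⟨h10, h1N, h1rec⟩ ⟨h20, h2N, h2rec⟩ i hi
    have hz := winprob_hom_zero N hN p q hp0 hp1 hq S hS
      (fun j => L₁ j - L₂ j) (by simp [h10, h20]) (by simp [h1N, h2N])
      (by
        intro j hj1 hj2
        have e1 := h1rec j hj1 hj2
        have e2 := h2rec j hj1 hj2
        ring_nf
        linarith) i hi
    exact sub_eq_zero.mp hz
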